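/- A Z-graded ring A has non-degenerate products in degree n if and only if A admits a non-degenerate associative graded bilinear form to an abelian group concentrated in degree n. -/

import Mathlib

/-- `A` has non-degenerate products in degree `n`: for every `i` and every nonzero
homogeneous `a ∈ 𝒜 i` there are `b, c ∈ 𝒜 (n - i)` with `a * b ≠ 0` and `c * a ≠ 0`. -/
def NondegProducts {A : Type} [Ring A] (𝒜 : ℤ → AddSubgroup A) (n : ℤ) : Prop :=
  ∀ i : ℤ, ∀ a ∈ 𝒜 i, a ≠ 0 →
    (∃ b ∈ 𝒜 (n - i), a * b ≠ 0) ∧ ∃ c ∈ 𝒜 (n - i), c * a ≠ 0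

/-- A `ℤ`-graded ring `A` has non-degenerate products in degree `n` if and
only if `A` admits a non-degenerate associative graded bilinear form with values in an
abelian group concentrated in degree `n`. -/
theorem nondegProducts_iff_exists_form {A : Type} [Ring A]
    (𝒜 : ℤ → AddSubgroup A) [GradedRing 𝒜] (n : ℤ) :
    NondegProducts 𝒜 n ↔
      ∃ (X : AddCommGrpCat.{0}) (B : A →+ A →+ X),
        -- the form is graded (concentrated in degree `n`)
        (∀ i j : ℤ, i + j ≠ n → ∀ a ∈ 𝒜 i, ∀ b ∈ 𝒜 j, B a b = 0) ∧
        -- non-degenerate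
        (∀ i : ℤ, ∀ a ∈ 𝒜 i, a ≠ 0 →
          (∃ b ∈ 𝒜 (n - i), B a b ≠ 0) ∧ ∃ c ∈ 𝒜 (n - i), B c a ≠ 0) ∧
        -- associative
        (∀ i j : ℤ, ∀ a ∈ 𝒜 i, ∀ b ∈ 𝒜 j, ∀ c ∈ 𝒜 (n - i - j),
          B (a * b) c = B a (b * c)) := by
  constructor
  · intro hnd
    refine ⟨AddCommGrpCat.of A, (AddMonoidHom.mul : A →+ A →+ A).compr₂
      (GradedRing.proj 𝒜 n), ?_, ?_, ?_⟩
    · intro i j hij a ha b hb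
      have hab : a * b ∈ 𝒜 (i + j) := SetLike.mul_mem_graded ha hb
      simp only [AddMonoidHom.compr₂_apply, AddMonoidHom.mul_apply]
      show GradedRing.proj 𝒜 n (a * b) = 0
      rw [GradedRing.proj_apply, DirectSum.decompose_of_mem_ne 𝒜 hab hij]
    · intro i a ha ha0
      obtain ⟨⟨b, hb, hab⟩, ⟨c, hc, hca⟩⟩ := hnd i a ha ha0
      constructor
      · refine ⟨b, hb, ?_⟩
        have hmem : a * b ∈ 𝒜 n := by
          have := SetLike.mul_mem_graded ha hb
          rwa [add_sub_cancel] at this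
        simp only [AddMonoidHom.compr₂_apply, AddMonoidHom.mul_apply]
        show GradedRing.proj 𝒜 n (a * b) ≠ 0
        rw [GradedRing.proj_apply, DirectSum.decompose_of_mem_same 𝒜 hmem]
        exact hab
      · refine ⟨c, hc, ?_⟩
        have hmem : c * a ∈ 𝒜 n := by
          have := SetLike.mul_mem_graded hc ha
          rwa [sub_add_cancel] at this
        simp only [AddMonoidHom.compr₂_apply, AddMonoidHom.mul_apply]
        show GradedRing.proj 𝒜 n (c * a) ≠ 0
        rw [GradedRing.proj_apply, DirectSum.decompose_of_mem_same 𝒜 hmem]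
        exact hca
    · intro i j a _ b _ c _
      simp only [AddMonoidHom.compr₂_apply, AddMonoidHom.mul_apply, mul_assoc]
  · rintro ⟨X, B, hgr, hnd, hassoc⟩
    intro i a ha ha0
    obtain ⟨⟨b, hb, hBab⟩, ⟨c, hc, hBca⟩⟩ := hnd i a ha ha0
    have h1 : (1 : A) ∈ 𝒜 0 := SetLike.one_mem_graded 𝒜
    constructor
    · refine ⟨b, hb, fun hab => hBab ?_⟩
      have := hassoc i (n - i) a ha b hb 1 (by simpa using h1)
      rw [hab, mul_one] at this
      simpa using this.symm
    · refine ⟨c, hc, fun hca => hBca ?_⟩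
      have := hassoc (n - i) i c hc a ha 1 (by simp; simpa using h1)
      rw [hca, mul_one] at this
      simpa using this.symm
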